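/- Let q > 2 and let C be any q-ary linear code of length n. Then there exists a monomial transformation σ of F_q^n such that C is σ-LCD, i.e. C ∩ (σ(C))^⊥ = {0}. -/

import Mathlib

open scoped BigOperators

/-- The Euclidean dual of a linear code `C ⊆ F^ι`. -/
def dualCode {F : Type*} [Field F] {ι : Type*} [Fintype ι]
    (C : Submodule F (ι → F)) : Submodule F (ι → F) where
  carrier := {b | ∀ c ∈ C, ∑ i, b i * c i = 0}
  zero_mem' := by intro c hc; simp
  add_mem' := by
    intro x y hx hy c hc
    simp only [Set.mem_setOf_eq, Pi.add_apply, add_mul, Finset.sum_add_distrib,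
      hx c hc, hy c hc, add_zero]
  smul_mem' := by
    intro r x hx c hc
    simp only [Set.mem_setOf_eq, Pi.smul_apply, smul_eq_mul, mul_assoc,
      ← Finset.mul_sum, hx c hc, mul_zero]

/-- The monomial transformation of `F^ι` given by a coordinate permutation `π` and a
diagonal part `d` (multiplication of each coordinate by a scalar), as a linear map. -/
def monoMap {F : Type*} [Field F] {ι : Type*} (π : Equiv.Perm ι) (d : ι → F) :
    (ι → F) →ₗ[F] (ι → F) where
  toFun v := fun i => d i * v (π i)
  map_add' := by intro a b; funext i; simp [mul_add]
  map_smul' := by intro r a; funext i; simp; ring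


noncomputable def gramM {F : Type*} [Field F] {n k : ℕ} (g : Fin k → Fin n → F)
    (d : Fin n → F) : Matrix (Fin k) (Fin k) F :=
  Matrix.of fun a b => ∑ i, d i * g a i * g b i

lemma det_zero_aux {F : Type*} [Field F] {k : ℕ} (u : Fin k → F) (A : Fin k → Fin k → F)
    (w : Fin k → F) {S : Finset (Fin k)} (hS : 1 < S.card) :
    Matrix.detRowAlternating (S.piecewise (fun a => w a • u) A) = 0 := by
  classical
  obtain ⟨a₁, ha₁, a₂, ha₂, hne⟩ := Finset.one_lt_card.mp hS
  set m := S.piecewise (fun a => w a • u) A with hm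
  have hma₁ : m a₁ = w a₁ • u := Finset.piecewise_eq_of_mem _ _ _ ha₁
  have step1 : Matrix.detRowAlternating m
      = w a₁ • Matrix.detRowAlternating (Function.update m a₁ u) := by
    conv_lhs => rw [← Function.update_eq_self a₁ m, hma₁]
    exact Matrix.detRowAlternating.map_update_smul _ _ _ _
  set m₁ := Function.update m a₁ u with hm₁
  have hm₁a₂ : m₁ a₂ = w a₂ • u := by
    rw [hm₁, Function.update_of_ne hne.symm]
    exact Finset.piecewise_eq_of_mem _ _ _ ha₂
  have step2 : Matrix.detRowAlternating m₁
      = w a₂ • Matrix.detRowAlternating (Function.update m₁ a₂ u) := by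
    conv_lhs => rw [← Function.update_eq_self a₂ m₁, hm₁a₂]
    exact Matrix.detRowAlternating.map_update_smul _ _ _ _
  have hzero : Matrix.detRowAlternating (Function.update m₁ a₂ u) = 0 := by
    apply Matrix.detRowAlternating.map_eq_zero_of_eq _ _ hne
    · rw [Function.update_of_ne hne, hm₁, Function.update_self, Function.update_self]
  rw [step1, step2, hzero, smul_zero, smul_zero]

lemma gram_det_affine {F : Type*} [Field F] {n k : ℕ} (g : Fin k → Fin n → F)
    (d : Fin n → F) (j : Fin n) (t : F) :
    (gramM g (Function.update d j t)).det
      = (gramM g (Function.update d j 0)).det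
        + ((gramM g (Function.update d j 1)).det - (gramM g (Function.update d j 0)).det) * t := by
  classical
  set u : Fin k → F := fun b => g b j with hu
  set A : Fin k → Fin k → F := fun a b => ∑ i, Function.update d j 0 i * g a i * g b i with hA
  have key : ∀ (s : F) (a b : Fin k), ∑ i, Function.update d j s i * g a i * g b i
      = (∑ i ∈ Finset.univ.erase j, d i * g a i * g b i) + s * g a j * g b j := by
    intro s a b
    rw [← Finset.sum_erase_add _ _ (Finset.mem_univ j)]
    congr 1
    · exact Finset.sum_congr rfl fun i hi => by
        rw [Function.update_of_ne (Finset.ne_of_mem_erase hi)]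
    · rw [Function.update_self]
  have hrow : ∀ s : F, (fun a b => ∑ i, Function.update d j s i * g a i * g b i)
      = (fun a => (s * g a j) • u) + A := by
    intro s
    funext a b
    simp only [Pi.add_apply, Pi.smul_apply, smul_eq_mul, hA]
    rw [key s a b, key 0 a b]
    simp only [hu]
    ring
  have hexp : ∀ s : F, (gramM g (Function.update d j s)).det
      = ∑ S : Finset (Fin k),
          Matrix.detRowAlternating (S.piecewise (fun a => (s * g a j) • u) A) := by
    intro s
    have h1 : (gramM g (Function.update d j s)).det
        = Matrix.detRowAlternating ((fun a => (s * g a j) • u) + A) :=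
      congrArg Matrix.det (hrow s)
    rw [h1]
    simpa using Matrix.detRowAlternating.toMultilinearMap.map_add_univ
      (fun a => (s * g a j) • u) A
  have perS : ∀ S : Finset (Fin k),
      Matrix.detRowAlternating (S.piecewise (fun a => (t * g a j) • u) A)
      = Matrix.detRowAlternating (S.piecewise (fun a => (0 * g a j) • u) A)
        + (Matrix.detRowAlternating (S.piecewise (fun a => (1 * g a j) • u) A)
          - Matrix.detRowAlternating (S.piecewise (fun a => (0 * g a j) • u) A)) * t := by
    intro S
    by_cases h0 : S = ∅
    · subst h0
      simp only [Finset.piecewise_empty]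
      ring
    by_cases h1 : S.card = 1
    · obtain ⟨a, rfl⟩ := Finset.card_eq_one.mp h1
      simp only [Finset.piecewise_singleton]
      have hsm : ∀ s : F, Matrix.detRowAlternating (Function.update A a ((s * g a j) • u))
          = (s * g a j) • Matrix.detRowAlternating (Function.update A a u) :=
        fun s => Matrix.detRowAlternating.map_update_smul _ _ _ _
      rw [hsm t, hsm 0, hsm 1]
      simp only [smul_eq_mul]
      ring
    · have hcard : 1 < S.card := by
        have h0' : S.card ≠ 0 := fun h => h0 (Finset.card_eq_zero.mp h)
        omega
      rw [det_zero_aux u A _ hcard, det_zero_aux u A _ hcard, det_zero_aux u A _ hcard]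
      ring
  rw [hexp t, hexp 0, hexp 1]
  rw [Finset.sum_congr rfl fun S _ => perS S]
  rw [Finset.sum_add_distrib, ← Finset.sum_mul, Finset.sum_sub_distrib]

open Matrix in
lemma exists_gram_det_ne_zero {F : Type*} [Field F] {n k : ℕ} (g : Fin k → Fin n → F)
    (hg : LinearIndependent F g) : ∃ d : Fin n → F, (gramM g d).det ≠ 0 := by
  classical
  set G : Matrix (Fin k) (Fin n) F := Matrix.of g with hG
  have hrank : G.rank = k := by
    rw [Matrix.rank_eq_finrank_span_row]
    have : Set.range G.row = Set.range g := rfl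
    rw [this, finrank_span_eq_card hg, Fintype.card_fin]
  have hrange : LinearMap.range G.mulVecLin = ⊤ := by
    apply Submodule.eq_top_of_finrank_eq
    have : Module.finrank F (LinearMap.range G.mulVecLin) = G.rank := rfl
    rw [this, hrank, Module.finrank_fin_fun]
  have hspan : Submodule.span F (Set.range fun i => Gᵀ i) = ⊤ := by
    rw [show (Set.range fun i => Gᵀ i) = Set.range G.col from rfl, ← Matrix.range_mulVecLin]
    exact hrange
  obtain ⟨b, hbsub, hbspan, hbind⟩ := exists_linearIndependent F (Set.range fun i => Gᵀ i)
  rw [hspan] at hbspan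
  have hbfin : b.Finite := (Set.finite_range _).subset hbsub
  haveI := hbfin.fintype
  let B : Module.Basis b F (Fin k → F) := Module.Basis.mk hbind (by rw [Subtype.range_coe, hbspan])
  have hcard : Fintype.card b = k := by
    have h1 := Module.finrank_eq_card_basis B
    rw [Module.finrank_fin_fun] at h1
    omega
  let e : Fin k ≃ b := (Fintype.equivFinOfCardEq hcard).symm
  have hch : ∀ x : b, ∃ i : Fin n, Gᵀ i = (x : Fin k → F) := fun x => hbsub x.2
  choose ch hch using hch
  have hchinj : Function.Injective ch := fun x y hxy =>
    Subtype.ext (by rw [← hch x, ← hch y, hxy])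
  set c : Fin k → Fin n := fun j => ch (e j) with hc
  have hcinj : Function.Injective c := fun j j' h => e.injective (hchinj h)
  have hgc : ∀ (x : b) (a : Fin k), g a (ch x) = (x : Fin k → F) a := fun x a =>
    congrFun (hch x) a
  set P : Matrix (Fin k) (Fin k) F := Matrix.of fun a j => (e j : Fin k → F) a with hP
  have hPunit : IsUnit P := by
    rw [← Matrix.linearIndependent_cols_iff_isUnit]
    have hPt : P.col = fun j => ((e j : Fin k → F)) := rfl
    rw [hPt]
    exact hbind.comp e e.injective
  have hPdet : P.det ≠ 0 := ((Matrix.isUnit_iff_isUnit_det P).mp hPunit).ne_zero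
  refine ⟨fun i => if i ∈ Finset.image c Finset.univ then 1 else 0, ?_⟩
  have hmat : gramM g (fun i => if i ∈ Finset.image c Finset.univ then (1:F) else 0)
      = P * Pᵀ := by
    ext a b'
    simp only [gramM, Matrix.mul_apply, Matrix.of_apply, Matrix.transpose_apply]
    have h1 : ∀ i : Fin n, (if i ∈ Finset.image c Finset.univ then (1:F) else 0)
        * g a i * g b' i
        = if i ∈ Finset.image c Finset.univ then g a i * g b' i else 0 := by
      intro i; split <;> simp
    rw [Finset.sum_congr rfl fun i _ => h1 i, Finset.sum_ite_mem, Finset.univ_inter,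
      Finset.sum_image (fun x _ y _ h => hcinj h)]
    exact Finset.sum_congr rfl fun j _ => by rw [hgc (e j) a, hgc (e j) b']; rfl
  rw [hmat, Matrix.det_mul, Matrix.det_transpose]
  exact mul_ne_zero hPdet hPdet

lemma exists_good_point {F : Type*} [Field F] [Fintype F] {n : ℕ} (f : (Fin n → F) → F)
    (haff : ∀ (d : Fin n → F) (j : Fin n) (t : F), f (Function.update d j t)
        = f (Function.update d j 0)
          + (f (Function.update d j 1) - f (Function.update d j 0)) * t)
    (hq : 2 < Fintype.card F) {d0 : Fin n → F} (h0 : f d0 ≠ 0) :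
    ∃ d, (∀ i, d i ≠ 0) ∧ f d ≠ 0 := by
  classical
  suffices h : ∀ s : Finset (Fin n), ∃ d, (∀ i ∈ s, d i ≠ 0) ∧ f d ≠ 0 by
    obtain ⟨d, h1, h2⟩ := h Finset.univ
    exact ⟨d, fun i => h1 i (Finset.mem_univ i), h2⟩
  intro s
  induction s using Finset.induction_on with
  | empty => exact ⟨d0, by simp, h0⟩
  | @insert j s hj ih =>
    obtain ⟨d, hds, hdf⟩ := ih
    by_cases hjs : d j ≠ 0
    · exact ⟨d, fun i hi => (Finset.mem_insert.mp hi).elim (fun h => h ▸ hjs)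
        (fun h => hds i h), hdf⟩
    · push_neg at hjs
      set α := f (Function.update d j 0) with hα'
      set β := f (Function.update d j 1) - f (Function.update d j 0) with hβ'
      have hfd : ∀ t, f (Function.update d j t) = α + β * t := fun t => haff d j t
      have hval : α + β * d j ≠ 0 := by
        rw [← hfd (d j), Function.update_eq_self]; exact hdf
      have hα : α ≠ 0 := by simpa [hjs] using hval
      obtain ⟨t, htnz, htval⟩ : ∃ t : F, t ≠ 0 ∧ α + β * t ≠ 0 := by
        by_cases hβ : β = 0
        · exact ⟨1, one_ne_zero, by simpa [hβ] using hα⟩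
        · obtain ⟨t, ht⟩ : ∃ t : F, t ∉ ({0, -α / β} : Finset F) := by
            by_contra hcon
            push_neg at hcon
            have hsub : (Finset.univ : Finset F) ⊆ {0, -α / β} := fun t _ => hcon t
            have h2 : ({0, -α / β} : Finset F).card ≤ 2 :=
              (Finset.card_insert_le _ _).trans (by simp)
            have h3 := Finset.card_le_card hsub
            rw [Finset.card_univ] at h3
            omega
          simp only [Finset.mem_insert, Finset.mem_singleton, not_or] at ht
          refine ⟨t, ht.1, fun hzero => ht.2 ?_⟩
          rw [eq_div_iff hβ]
          linear_combination hzero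
      refine ⟨Function.update d j t, ?_, by rw [hfd t]; exact htval⟩
      intro i hi
      rcases Finset.mem_insert.mp hi with rfl | his
      · rwa [Function.update_self]
      · rw [Function.update_of_ne (by rintro rfl; exact hj his)]
        exact hds i his

open Matrix in
lemma inf_dual_eq_bot {F : Type*} [Field F] {n k : ℕ} (C : Submodule F (Fin n → F))
    (bC : Module.Basis (Fin k) F C) (d : Fin n → F)
    (hdet : (gramM (fun a => (bC a : Fin n → F)) d).det ≠ 0) :
    C ⊓ dualCode (C.map (monoMap 1 d)) = ⊥ := by
  classical
  set g : Fin k → Fin n → F := fun a => (bC a : Fin n → F) with hg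
  rw [Submodule.eq_bot_iff]
  rintro x ⟨hx1, hx2⟩
  have hx2' : ∀ c ∈ C.map (monoMap 1 d), ∑ i, x i * c i = 0 := hx2
  set t : Fin k → F := fun a => bC.repr ⟨x, hx1⟩ a with ht'
  have hx' : (∑ a, t a • g a) = x := by
    have hsum := congrArg (Subtype.val) (bC.sum_repr ⟨x, hx1⟩)
    simpa [-Module.Basis.sum_repr] using hsum
  have hxe : ∀ i0 : Fin n, x i0 = ∑ a, t a * g a i0 := by
    intro i0
    rw [← hx']
    simp [Finset.sum_apply]
  have horto : ∀ y ∈ C, ∑ i, x i * (d i * y i) = 0 := by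
    intro y hy
    have := hx2' (monoMap 1 d y) (Submodule.mem_map_of_mem hy)
    simpa [monoMap] using this
  have hvm : Matrix.vecMul t (gramM g d) = 0 := by
    funext b'
    have hstep : ∀ i : Fin n,
        (∑ a, t a * (d i * g a i * g b' i)) = x i * (d i * g b' i) := by
      intro i
      calc ∑ a, t a * (d i * g a i * g b' i)
          = ∑ a, (t a * g a i) * (d i * g b' i) :=
            Finset.sum_congr rfl fun a _ => by ring
        _ = (∑ a, t a * g a i) * (d i * g b' i) := by rw [Finset.sum_mul]
        _ = x i * (d i * g b' i) := by rw [← hxe i]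
    have hv : Matrix.vecMul t (gramM g d) b' = ∑ a, t a * ∑ i, d i * g a i * g b' i := by
      simp [Matrix.vecMul, dotProduct, gramM]
    show Matrix.vecMul t (gramM g d) b' = (0 : F)
    rw [hv]
    calc ∑ a, t a * ∑ i, d i * g a i * g b' i
        = ∑ a, ∑ i, t a * (d i * g a i * g b' i) :=
          Finset.sum_congr rfl fun a _ => Finset.mul_sum _ _ _
      _ = ∑ i, ∑ a, t a * (d i * g a i * g b' i) := Finset.sum_comm
      _ = ∑ i, x i * (d i * g b' i) := Finset.sum_congr rfl fun i _ => hstep i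
      _ = 0 := horto (g b') (bC b').2
  have hMunit : IsUnit (gramM g d) :=
    (Matrix.isUnit_iff_isUnit_det _).mpr (isUnit_iff_ne_zero.mpr hdet)
  have htz : t = 0 := by
    have hinj := Matrix.vecMul_injective_iff_isUnit.mpr hMunit
    apply hinj
    show Matrix.vecMul t (gramM g d) = Matrix.vecMul 0 (gramM g d)
    rw [hvm, Matrix.zero_vecMul]
  funext i0
  rw [hxe i0]
  simp [htz]

/-- Let `q > 2` and let `C` be any `q`-ary linear code of length `n`.  Then there exists
a monomial transformation `σ` of `F_q^n` (a permutation `π` together with nonzero scalars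
`d i`) such that `C` is `σ`-LCD, i.e. `C ∩ (σ(C))^⊥ = {0}`. -/
theorem exists_monomial_lcd {F : Type*} [Field F] [Fintype F] {n : ℕ}
    (hq : 2 < Fintype.card F) (C : Submodule F (Fin n → F)) :
    ∃ (π : Equiv.Perm (Fin n)) (d : Fin n → F), (∀ i, d i ≠ 0) ∧
      C ⊓ dualCode (C.map (monoMap π d)) = ⊥ := by
  classical
  let bC : Module.Basis (Fin (Module.finrank F ↥C)) F ↥C := Module.finBasis F ↥C
  set g : Fin (Module.finrank F ↥C) → Fin n → F := fun a => (bC a : Fin n → F) with hgdef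
  have hg : LinearIndependent F g :=
    bC.linearIndependent.map' C.subtype (Submodule.ker_subtype C)
  obtain ⟨d0, hd0⟩ := exists_gram_det_ne_zero g hg
  obtain ⟨d, hdnz, hddet⟩ := exists_good_point (fun d => (gramM g d).det)
      (fun d j t => gram_det_affine g d j t) hq hd0
  exact ⟨1, d, hdnz, inf_dual_eq_bot C bC d hddet⟩
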